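/- Let G be an abelian lattice-ordered group and u > 0 in G. Then the subgroup of G generated by the segment [0,u] equals the set {x ∈ G : ∃ n ≥ 0, |x| ≤ n • u}. -/

import Mathlib

private lemma mem_closure_of_bounded {G : Type*} [Lattice G] [AddCommGroup G]
    [CovariantClass G G (· + ·) (· ≤ ·)] (u : G) (hu : 0 ≤ u) :
    ∀ n : ℕ, ∀ y : G, 0 ≤ y → y ≤ n • u →
      y ∈ AddSubgroup.closure (Set.Icc (0 : G) u) := by
  intro n
  induction n with
  | zero =>
    intro y hy hyn
    simp only [zero_smul] at hyn
    have : y = 0 := le_antisymm hyn hy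
    rw [this]; exact AddSubgroup.zero_mem _
  | succ n ih =>
    intro y hy hyn
    have hz : y ⊓ u ∈ Set.Icc (0 : G) u := ⟨le_inf hy hu, inf_le_right⟩
    set w := y - y ⊓ u with hw
    have hw0 : 0 ≤ w := by
      have : y ⊓ u ≤ y := inf_le_left
      simp only [hw]; exact sub_nonneg.mpr this
    have hwn : w ≤ n • u := by
      have h1 : w = (y - y) ⊔ (y - u) := by
        rw [hw, sub_inf]
      have h2 : y - u ≤ n • u := by
        rw [sub_le_iff_le_add]
        calc y ≤ (n + 1) • u := hyn
          _ = n • u + u := succ_nsmul u n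
      rw [h1]
      exact sup_le (by simpa using nsmul_nonneg hu n) h2
    have hwc := ih w hw0 hwn
    have : y = (y ⊓ u) + w := by rw [hw]; abel
    rw [this]
    exact AddSubgroup.add_mem _ (AddSubgroup.subset_closure hz) hwc

theorem closure_Icc_eq_bounded {G : Type*} [Lattice G] [AddCommGroup G]
    [CovariantClass G G (· + ·) (· ≤ ·)] (u : G) (hu : 0 < u) :
    (AddSubgroup.closure (Set.Icc (0 : G) u) : Set G)
      = {x : G | ∃ n : ℕ, x ⊔ (-x) ≤ n • u} := by
  ext x
  simp only [Set.mem_setOf_eq, SetLike.mem_coe]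
  constructor
  · intro hx
    induction hx using AddSubgroup.closure_induction with
    | mem a ha =>
      exact ⟨1, by
        rw [one_smul]
        exact sup_le ha.2 ((neg_nonpos.mpr ha.1).trans hu.le)⟩
    | zero => exact ⟨0, by simp⟩
    | add a b _ _ iha ihb =>
      obtain ⟨m, hm⟩ := iha
      obtain ⟨n, hn⟩ := ihb
      refine ⟨m + n, ?_⟩
      have habs : (a + b) ⊔ (-(a + b)) ≤ (a ⊔ -a) + (b ⊔ -b) := by
        exact abs_add_le a b
      calc (a + b) ⊔ (-(a + b)) ≤ (a ⊔ -a) + (b ⊔ -b) := habs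
        _ ≤ m • u + n • u := add_le_add hm hn
        _ = (m + n) • u := (add_nsmul u m n).symm
    | neg a _ iha =>
      obtain ⟨m, hm⟩ := iha
      exact ⟨m, by rwa [neg_neg, sup_comm]⟩
  · rintro ⟨n, hb⟩
    have habs : |x| ≤ n • u := hb
    have h1 : x⁺ ∈ AddSubgroup.closure (Set.Icc (0 : G) u) := by
      refine mem_closure_of_bounded u hu.le n _ (posPart_nonneg x) ?_
      calc x⁺ = x ⊔ 0 := rfl
        _ ≤ |x| := sup_le (le_abs_self x) (abs_nonneg x)
        _ ≤ n • u := habs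
    have h2 : x⁻ ∈ AddSubgroup.closure (Set.Icc (0 : G) u) := by
      refine mem_closure_of_bounded u hu.le n _ (negPart_nonneg x) ?_
      calc x⁻ = -x ⊔ 0 := rfl
        _ ≤ |x| := sup_le (neg_le_abs x) (abs_nonneg x)
        _ ≤ n • u := habs
    have : x = x⁺ - x⁻ := (posPart_sub_negPart x).symm
    rw [this]
    exact AddSubgroup.sub_mem _ h1 h2
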